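/- (Type C₂ root subgroup as a commutator set when 2 is invertible; instance of the paper's Proposition on G(C₂,R) with 1/2 ∈ R.) Let R be a commutative ring in which 2 is a unit. Then {⁅1 + t·(E₁₄ + E₂₃), 1 + 2⁻¹·(E₂₁ − E₃₄)⁆ : t ∈ R} = {1 + s·E₂₄ : s ∈ R}, where ⁅x, y⁆ = x·y·x⁻¹·y⁻¹ and the matrices are 4×4 matrices over R. In other words, commutating the short-root subgroup X_{e₁+e₂} with the fixed element x_{e₂−e₁}(1/2) yields exactly the long-root subgroup X_{2e₂} = {x_{2e₂}(s) : s ∈ R}. -/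

import Mathlib

open Matrix

/-- The 4×4 matrix unit over `R`, with rows and columns indexed by `Fin 2 ⊕ Fin 2`
(so that `1,2,3,4` correspond to `inl 0, inl 1, inr 0, inr 1`). -/
def Esp (R : Type*) [CommRing R] (i j : Fin 2 ⊕ Fin 2) :
    Matrix (Fin 2 ⊕ Fin 2) (Fin 2 ⊕ Fin 2) R :=
  Matrix.single i j 1

set_option linter.unnecessarySeqFocus false in
set_option linter.unusedTactic false in
lemma commutator_C2_key {R : Type*} [CommRing R] [Invertible (2 : R)] (t : R) :
    (1 + t • (Esp R (.inl 0) (.inr 1) + Esp R (.inl 1) (.inr 0))) *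
        (1 + (⅟(2 : R)) • (Esp R (.inl 1) (.inl 0) - Esp R (.inr 0) (.inr 1))) *
        (1 - t • (Esp R (.inl 0) (.inr 1) + Esp R (.inl 1) (.inr 0))) *
        (1 - (⅟(2 : R)) • (Esp R (.inl 1) (.inl 0) - Esp R (.inr 0) (.inr 1)))
      = 1 + (-t) • Esp R (.inl 1) (.inr 1) := by
  ext i j
  simp only [Esp, Matrix.mul_apply, Fintype.sum_sum_type, Fin.sum_univ_two,
    Matrix.add_apply, Matrix.sub_apply, Matrix.smul_apply, Matrix.one_apply,
    Matrix.single, of_apply, smul_eq_mul]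
  rcases i with i | i <;> rcases j with j | j <;> fin_cases i <;> fin_cases j <;>
    simp <;> ring_nf <;> simp [invOf_mul_self, mul_invOf_self] <;> ring_nf <;>
    rw [mul_right_comm, invOf_mul_self, one_mul]

/-- Type `C₂` long-root subgroup as a commutator set when `2` is invertible: the set of
commutators `⁅x_{e₁+e₂}(t), x_{e₂−e₁}(1/2)⁆`, with
`x_{e₁+e₂}(t) = 1 + t·(E₁₄ + E₂₃)` (inverse `1 − t·(E₁₄ + E₂₃)`) and
`x_{e₂−e₁}(1/2) = 1 + 2⁻¹·(E₂₁ − E₃₄)` (inverse `1 − 2⁻¹·(E₂₁ − E₃₄)`), is exactly the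
long-root subgroup `X_{2e₂} = {1 + s·E₂₄ : s ∈ R}`. -/
theorem root_subgroup_commutator_C2_half {R : Type*} [CommRing R] [Invertible (2 : R)] :
    {m : Matrix (Fin 2 ⊕ Fin 2) (Fin 2 ⊕ Fin 2) R | ∃ t : R,
      m = (1 + t • (Esp R (.inl 0) (.inr 1) + Esp R (.inl 1) (.inr 0))) *
        (1 + (⅟(2 : R)) • (Esp R (.inl 1) (.inl 0) - Esp R (.inr 0) (.inr 1))) *
        (1 - t • (Esp R (.inl 0) (.inr 1) + Esp R (.inl 1) (.inr 0))) *
        (1 - (⅟(2 : R)) • (Esp R (.inl 1) (.inl 0) - Esp R (.inr 0) (.inr 1)))} =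
    {m : Matrix (Fin 2 ⊕ Fin 2) (Fin 2 ⊕ Fin 2) R | ∃ s : R,
      m = 1 + s • Esp R (.inl 1) (.inr 1)} := by
  ext m
  constructor
  · rintro ⟨t, rfl⟩
    exact ⟨-t, by rw [commutator_C2_key]⟩
  · rintro ⟨s, rfl⟩
    exact ⟨-s, by rw [commutator_C2_key, neg_neg]⟩
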